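/- Let (M,g) be a complete Riemannian manifold and X a smooth vector field on M with uniformly bounded covariant derivative, i.e., C := sup_{p∈M} ‖∇X(p)‖_g < ∞, where ‖∇X(p)‖_g = sup_{0≠Y_p∈T_pM} ‖∇_{Y_p}X‖_g/‖Y_p‖_g. Then X is complete. -/

import Mathlib

open scoped Manifold

open scoped Topology
open Set Function

section BcdAux

variable {n : ℕ} {M : Type*} [TopologicalSpace M] [T2Space M]
    [ChartedSpace (EuclideanSpace ℝ (Fin n)) M]
    [IsManifold (𝓡 n) (⊤ : ℕ∞) M]

lemma bcd_nonneg {F : Type*} [AddCommGroup F] [Module ℝ F]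
    (g : F →ₗ[ℝ] F →ₗ[ℝ] ℝ)
    (hpos : ∀ v : F, v ≠ 0 → 0 < g v v) (v : F) : 0 ≤ g v v := by
  rcases eq_or_ne v 0 with rfl | h
  · simp
  · exact (hpos v h).le

lemma bcd_cs {F : Type*} [AddCommGroup F] [Module ℝ F]
    (g : F →ₗ[ℝ] F →ₗ[ℝ] ℝ) (hsymm : ∀ v w : F, g v w = g w v)
    (hpos : ∀ v : F, v ≠ 0 → 0 < g v v) (v w : F) :
    g v w ≤ Real.sqrt (g v v) * Real.sqrt (g w w) := by
  have hnn := bcd_nonneg g hpos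
  have hq : ∀ t : ℝ, 0 ≤ (g w w) * (t * t) + (2 * g v w) * t + g v v := by
    intro t
    have h := hnn (v + t • w)
    simp only [map_add, map_smul, LinearMap.add_apply, LinearMap.smul_apply, smul_eq_mul] at h
    rw [hsymm w v] at h
    ring_nf at h ⊢
    linarith
  have hd := discrim_le_zero hq
  rw [discrim] at hd
  have hsq : (g v w) ^ 2 ≤ (g v v) * (g w w) := by nlinarith
  calc g v w ≤ |g v w| := le_abs_self _
    _ = Real.sqrt ((g v w) ^ 2) := (Real.sqrt_sq_eq_abs _).symm
    _ ≤ Real.sqrt ((g v v) * (g w w)) := Real.sqrt_le_sqrt hsq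
    _ = Real.sqrt (g v v) * Real.sqrt (g w w) := Real.sqrt_mul (hnn v) _

omit [T2Space M] in
lemma bcd_smoothOn
    {X : ∀ q : M, TangentSpace (𝓡 n) q}
    (hX : ContMDiff (𝓡 n) (𝓡 n).tangent (⊤ : ℕ∞)
      (fun q => (⟨q, X q⟩ : TangentBundle (𝓡 n) M)))
    {γ : ℝ → M} {s : Set ℝ} (hs : IsOpen s) (hγ : IsMIntegralCurveOn γ X s) :
    ContMDiffOn 𝓘(ℝ, ℝ) (𝓡 n) (⊤ : ℕ∞) γ s := by
  suffices h : ∀ t₀ ∈ s, ContMDiffAt 𝓘(ℝ, ℝ) (𝓡 n) (⊤ : ℕ∞) γ t₀ from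
    fun t ht => (h t ht).contMDiffWithinAt
  intro t₀ ht₀
  set p := γ t₀ with hp
  set f : ℝ → EuclideanSpace ℝ (Fin n) := (extChartAt (𝓡 n) p) ∘ γ with hf
  set v' : EuclideanSpace ℝ (Fin n) → EuclideanSpace ℝ (Fin n) := fun x =>
    tangentCoordChange (𝓡 n) ((extChartAt (𝓡 n) p).symm x) p ((extChartAt (𝓡 n) p).symm x)
      (X ((extChartAt (𝓡 n) p).symm x)) with hv'
  -- the open set on which `v'` is smooth
  set U : Set (EuclideanSpace ℝ (Fin n)) := (extChartAt (𝓡 n) p).target ∩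
      (extChartAt (𝓡 n) p).symm ⁻¹' (univ ∩
        (fun q => (⟨q, X q⟩ : TangentBundle (𝓡 n) M)) ⁻¹'
          (extChartAt (𝓡 n).tangent (⟨p, X p⟩ : TangentBundle (𝓡 n) M)).source) with hU
  have hv'' : ContDiffOn ℝ ((⊤ : ℕ∞) : WithTop ℕ∞) v' U := by
    have h2 := (contMDiffOn_iff.mp (hX.contMDiffOn (s := univ))).2 p ⟨p, X p⟩
    exact contDiff_snd.comp_contDiffOn h2
  -- an open interval around t₀ on which γ stays in the chart
  have hnhds : s ∩ γ ⁻¹' (extChartAt (𝓡 n) p).source ∈ 𝓝 t₀ := by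
    refine Filter.inter_mem (hs.mem_nhds ht₀) ?_
    exact ((hγ.continuousWithinAt ht₀).continuousAt (hs.mem_nhds ht₀)).preimage_mem_nhds (extChartAt_source_mem_nhds p)
  obtain ⟨J, hJsub, hJo, htJ⟩ := mem_nhds_iff.mp hnhds
  have hJs : J ⊆ s := fun t ht => (hJsub ht).1
  have hJsrc : ∀ t ∈ J, γ t ∈ (extChartAt (𝓡 n) p).source := fun t ht => (hJsub ht).2
  have hsymm : ∀ t ∈ J, (extChartAt (𝓡 n) p).symm (f t) = γ t := fun t ht =>
    PartialEquiv.left_inv _ (hJsrc t ht)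
  have hmaps : MapsTo f J U := by
    intro t ht
    refine ⟨(extChartAt (𝓡 n) p).map_source (hJsrc t ht), ?_⟩
    rw [mem_preimage, hsymm t ht]
    refine ⟨mem_univ _, ?_⟩
    rw [mem_preimage, extChartAt_source]
    exact (TangentBundle.mem_chart_source_iff _ _).mpr
      (by simpa [extChartAt_source] using hJsrc t ht)
  -- the ODE satisfied by f
  have hderiv : ∀ t ∈ J, HasDerivAt f (v' (f t)) t := by
    intro t ht
    have h := (hγ.hasDerivWithinAt (t₀ := t₀) (hJs ht) (by rw [← hp]; exact hJsrc t ht)).hasDerivAt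
      (hs.mem_nhds (hJs ht))
    rw [← hp] at h
    apply h.congr_deriv
    rw [hv']
    congr 1 <;> rw [show f t = (extChartAt (𝓡 n) p) (γ t) from rfl,
      PartialEquiv.left_inv _ (hJsrc t ht)]
  -- bootstrap
  have hboot : ∀ k : ℕ, ContDiffOn ℝ k f J := by
    intro k
    induction k with
    | zero =>
      simp only [CharP.cast_eq_zero]
      rw [contDiffOn_zero]
      exact fun t ht => (hderiv t ht).continuousAt.continuousWithinAt
    | succ k ih =>
      have : ((k : WithTop ℕ∞) + 1) = ((k+1 : ℕ) : WithTop ℕ∞) := by push_cast; ring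
      rw [← this, contDiffOn_succ_iff_deriv_of_isOpen hJo]
      refine ⟨fun t ht => ((hderiv t ht).differentiableAt).differentiableWithinAt, ?_, ?_⟩
      · intro hk; exact absurd hk (by simp)
      · have hle : (k : WithTop ℕ∞) ≤ ((⊤ : ℕ∞) : WithTop ℕ∞) := by
          exact_mod_cast le_top
        have : ContDiffOn ℝ k (v' ∘ f) J := (hv''.of_le hle).comp ih hmaps
        exact this.congr fun t ht => (hderiv t ht).deriv
  have hfC : ∀ k : ℕ, ContDiffAt ℝ k f t₀ := fun k =>
    (hboot k).contDiffAt (hJo.mem_nhds htJ)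
  -- conclude
  rw [contMDiffAt_infty]
  intro k
  have h1 : ContMDiffAt 𝓘(ℝ, EuclideanSpace ℝ (Fin n)) (𝓡 n) k
      (extChartAt (𝓡 n) p).symm (f t₀) :=
    (contMDiffOn_extChartAt_symm p).contMDiffAt
      ((isOpen_extChartAt_target p).mem_nhds ((extChartAt (𝓡 n) p).map_source (hJsrc t₀ htJ)))
  have h2 : ContMDiffAt 𝓘(ℝ, ℝ) 𝓘(ℝ, EuclideanSpace ℝ (Fin n)) k f t₀ :=
    (hfC k).contMDiffAt
  refine (h1.comp t₀ h2).congr_of_eventuallyEq ?_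
  filter_upwards [hJo.mem_nhds htJ] with t ht
  exact (hsymm t ht).symm

open ODE IsPicardLindelof in
lemma bcd_pl_sol {E : Type*} [NormedAddCommGroup E] [NormedSpace ℝ E] [CompleteSpace E]
    {f : ℝ → E → E} {tmin tmax : ℝ} {t₀ : Icc tmin tmax} {x₀ : E} {a L K : NNReal}
    (hf : IsPicardLindelof f t₀ x₀ a 0 L K) :
    ∃ F : ℝ → E, F t₀ = x₀ ∧ ∀ t ∈ Icc tmin tmax,
      F t ∈ Metric.closedBall x₀ a ∧ HasDerivWithinAt F (f t (F t)) (Icc tmin tmax) t := by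
  obtain ⟨α, hα⟩ := FunSpace.exists_isFixedPt_next hf (Metric.mem_closedBall_self (by simp))
  refine ⟨α.compProj, by rw [FunSpace.compProj_val, ← hα, FunSpace.next_apply₀],
    fun t ht => ⟨α.compProj_mem_closedBall hf.mul_max_le, ?_⟩⟩
  apply hasDerivWithinAt_picard_Icc t₀.2 hf.continuousOn_uncurry
    α.continuous_compProj.continuousOn (fun _ ht' => α.compProj_mem_closedBall hf.mul_max_le)
    x₀ ht |>.congr_of_mem _ ht
  intro t' ht'
  nth_rw 1 [← hα]
  rw [FunSpace.compProj_of_mem ht', FunSpace.next_apply]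

set_option maxHeartbeats 1000000 in
omit [T2Space M] in
lemma bcd_localFlow
    {X : ∀ q : M, TangentSpace (𝓡 n) q}
    (hX : ContMDiff (𝓡 n) (𝓡 n).tangent (⊤ : ℕ∞)
      (fun q => (⟨q, X q⟩ : TangentBundle (𝓡 n) M)))
    (p : M) :
    ∃ ε > (0 : ℝ), ∃ U ∈ 𝓝 p, ∀ x ∈ U, ∃ γ : ℝ → M, γ 0 = x ∧
      IsMIntegralCurveOn γ X (Ioo (-ε) ε) := by
  set x₀ : EuclideanSpace ℝ (Fin n) := extChartAt (𝓡 n) p p with hx₀def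
  set v' : EuclideanSpace ℝ (Fin n) → EuclideanSpace ℝ (Fin n) := fun x =>
    tangentCoordChange (𝓡 n) ((extChartAt (𝓡 n) p).symm x) p ((extChartAt (𝓡 n) p).symm x)
      (X ((extChartAt (𝓡 n) p).symm x)) with hv'
  set T : Set (EuclideanSpace ℝ (Fin n)) := (extChartAt (𝓡 n) p).target ∩
      (extChartAt (𝓡 n) p).symm ⁻¹' (univ ∩
        (fun q => (⟨q, X q⟩ : TangentBundle (𝓡 n) M)) ⁻¹'
          (extChartAt (𝓡 n).tangent (⟨p, X p⟩ : TangentBundle (𝓡 n) M)).source) with hT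
  have hTopen : IsOpen T := by
    apply (continuousOn_extChartAt_symm p).isOpen_inter_preimage (isOpen_extChartAt_target p)
    exact isOpen_univ.inter ((hX.continuous.isOpen_preimage _ (isOpen_extChartAt_source _)))
  have hx₀T : x₀ ∈ T := by
    refine ⟨(extChartAt (𝓡 n) p).map_source (mem_extChartAt_source p), ?_⟩
    rw [mem_preimage, PartialEquiv.left_inv _ (mem_extChartAt_source p)]
    refine ⟨mem_univ _, ?_⟩
    rw [mem_preimage, extChartAt_source]
    exact (TangentBundle.mem_chart_source_iff _ _).mpr (mem_chart_source _ p)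
  have hv'' : ContDiffOn ℝ ((⊤ : ℕ∞) : WithTop ℕ∞) v' T := by
    have h2 := (contMDiffOn_iff.mp (hX.contMDiffOn (s := univ))).2 p ⟨p, X p⟩
    exact contDiff_snd.comp_contDiffOn h2
  have hv'at : ContDiffAt ℝ 1 v' x₀ :=
    ((hv''.contDiffAt (hTopen.mem_nhds hx₀T)).of_le (by exact_mod_cast le_top))
  -- Lipschitz constant
  obtain ⟨K, sl, hsl, hlip⟩ := hv'at.exists_lipschitzOnWith
  -- radius
  have hnorm : ∀ᶠ x in 𝓝 x₀, ‖v' x‖ ≤ ‖v' x₀‖ + 1 := by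
    have := hv'at.continuousAt.norm
    filter_upwards [this.eventually_le_const (lt_add_one _)] with x hx using hx
  have hmem : sl ∩ T ∩ {x | ‖v' x‖ ≤ ‖v' x₀‖ + 1} ∈ 𝓝 x₀ :=
    Filter.inter_mem (Filter.inter_mem hsl (hTopen.mem_nhds hx₀T)) hnorm
  obtain ⟨R, hR, hRsub⟩ := Metric.nhds_basis_closedBall.mem_iff.mp hmem
  set Cb : ℝ := ‖v' x₀‖ + 1 with hCb
  have hCbpos : 0 < Cb := by positivity
  set ε : ℝ := (R / 2) / Cb with hε
  have hεpos : 0 < ε := by positivity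
  refine ⟨ε, hεpos, (extChartAt (𝓡 n) p).source ∩ extChartAt (𝓡 n) p ⁻¹' Metric.ball x₀ (R / 2),
    Filter.inter_mem (extChartAt_source_mem_nhds p)
      ((continuousAt_extChartAt p).preimage_mem_nhds
        (Metric.ball_mem_nhds _ (by positivity))), fun x hx => ?_⟩
  set y : EuclideanSpace ℝ (Fin n) := extChartAt (𝓡 n) p x with hy
  have hyball : y ∈ Metric.ball x₀ (R / 2) := hx.2
  have hball_sub : Metric.closedBall y (R / 2) ⊆ Metric.closedBall x₀ R := by
    apply Metric.closedBall_subset_closedBall'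
    have := (Metric.mem_ball.mp hyball).le
    linarith [this]
  -- the Picard-Lindelöf data
  have hpl : IsPicardLindelof (fun _ : ℝ => v') (tmin := -ε) (tmax := ε)
      ⟨0, by constructor <;> linarith⟩ y ⟨R / 2, by positivity⟩ 0 ⟨Cb, hCbpos.le⟩ K :=
    { lipschitzOnWith := fun t _ => (hlip.mono (fun z hz => (hRsub (hball_sub hz)).1.1))
      continuousOn := fun _ _ => continuousOn_const
      norm_le := fun t _ z hz => (hRsub (hball_sub hz)).2
      mul_max_le := by
        show Cb * max (ε - 0) (0 - -ε) ≤ R / 2 - 0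
        rw [sub_zero, zero_sub, neg_neg, max_self, hε, sub_zero]
        rw [mul_div_cancel₀ _ (ne_of_gt hCbpos)] }
  obtain ⟨F, hF0, hFsol⟩ := bcd_pl_sol hpl
  have hF0' : F 0 = y := hF0
  have hFmem : ∀ t ∈ Icc (-ε) ε, F t ∈ Metric.closedBall y (R / 2) := fun t ht =>
    (hFsol t ht).1
  have hFT : ∀ t ∈ Icc (-ε) ε, F t ∈ sl ∩ T ∩ {x | ‖v' x‖ ≤ ‖v' x₀‖ + 1} := fun t ht =>
    hRsub (hball_sub (hFmem t ht))
  have hFderiv : ∀ t ∈ Ioo (-ε) ε, HasDerivAt F (v' (F t)) t := fun t ht =>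
    ((hFsol t (Ioo_subset_Icc_self ht)).2).hasDerivAt (Icc_mem_nhds ht.1 ht.2)
  refine ⟨(extChartAt (𝓡 n) p).symm ∘ F, ?_, ?_⟩
  · simp only [Function.comp_apply, hF0']
    exact PartialEquiv.left_inv _ hx.1
  intro t ht
  set xₜ : M := (extChartAt (𝓡 n) p).symm (F t) with hxt
  have h : HasDerivAt F (tangentCoordChange (𝓡 n) xₜ p xₜ (X xₜ)) t := hFderiv t ht
  have hf3 : F t ∈ interior (extChartAt (𝓡 n) p).target := by
    rw [(isOpen_extChartAt_target p).interior_eq]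
    exact (hFT t (Ioo_subset_Icc_self ht)).1.2.1
  have hf3' := mem_of_mem_of_subset hf3 interior_subset
  have hft1 := mem_preimage.mp <|
    mem_of_mem_of_subset hf3' (extChartAt (𝓡 n) p).target_subset_preimage_source
  have hft2 := mem_extChartAt_source (I := 𝓡 n) xₜ
  apply HasMFDerivAt.hasMFDerivWithinAt
  refine ⟨(continuousAt_extChartAt_symm'' hf3').comp h.continuousAt,
    ?_⟩
  suffices hD : HasDerivAt ((extChartAt (𝓡 n) xₜ ∘ (extChartAt (𝓡 n) p).symm) ∘ F) (X xₜ) t by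
    have h' := (hD.hasDerivWithinAt (s := range (𝓘(ℝ, ℝ) : ModelWithCorners ℝ ℝ ℝ))).hasFDerivWithinAt
    exact h'
  erw [← tangentCoordChange_self (I := 𝓡 n) (x := xₜ) (z := xₜ) (v := X xₜ) hft2,
    ← tangentCoordChange_comp (x := p) ⟨⟨hft2, hft1⟩, hft2⟩]
  apply HasFDerivAt.comp_hasDerivAt _ _ h
  apply HasFDerivWithinAt.hasFDerivAt (s := range (𝓡 n)) _ <|
    mem_nhds_iff.mpr ⟨interior (extChartAt (𝓡 n) p).target,
      subset_trans interior_subset (extChartAt_target_subset_range ..),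
      isOpen_interior, hf3⟩
  rw [← (extChartAt (𝓡 n) p).right_inv hf3']
  exact hasFDerivWithinAt_tangentCoordChange ⟨hft1, hft2⟩

omit [T2Space M] in
lemma bcd_uniformTime
    {X : ∀ q : M, TangentSpace (𝓡 n) q}
    (hflow : ∀ p : M, ∃ ε > (0 : ℝ), ∃ U ∈ 𝓝 p, ∀ x ∈ U, ∃ γ : ℝ → M, γ 0 = x ∧
      IsMIntegralCurveOn γ X (Ioo (-ε) ε))
    {K : Set M} (hK : IsCompact K) :
    ∃ ε > (0 : ℝ), ∀ x ∈ K, ∃ γ : ℝ → M, γ 0 = x ∧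
      IsMIntegralCurveOn γ X (Ioo (-ε) ε) := by
  choose e he U hU hsol using hflow
  obtain ⟨t, _, hcover⟩ := hK.elim_nhds_subcover U (fun p _ => hU p)
  rcases t.eq_empty_or_nonempty with rfl | hne
  · exact ⟨1, one_pos, fun x hx => absurd (hcover hx) (by simp)⟩
  refine ⟨t.inf' hne e, ?_, fun x hx => ?_⟩
  · rw [gt_iff_lt, Finset.lt_inf'_iff]
    exact fun p _ => he p
  · obtain ⟨p, hpt, hxU⟩ := by simpa using hcover hx
    obtain ⟨γ, h0, hγ⟩ := hsol p x hxU
    exact ⟨γ, h0, hγ.mono (Ioo_subset_Ioo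
      (neg_le_neg (Finset.inf'_le _ hpt)) (Finset.inf'_le _ hpt))⟩

set_option maxHeartbeats 1000000 in
omit [T2Space M] in
lemma bcd_stay
    (g : ∀ q : M, EuclideanSpace ℝ (Fin n) →ₗ[ℝ] EuclideanSpace ℝ (Fin n) →ₗ[ℝ] ℝ)
    (hgsymm : ∀ (q : M) (v w : EuclideanSpace ℝ (Fin n)), g q v w = g q w v)
    (hgpos : ∀ (q : M) (v : EuclideanSpace ℝ (Fin n)), v ≠ 0 → 0 < g q v v)
    (d : M → M → ℝ)
    (hdsymm : ∀ p q, d p q = d q p)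
    (hdlen : ∀ γ : ℝ → M, ContMDiff 𝓘(ℝ, ℝ) (𝓡 n) (⊤ : ℕ∞) γ → ∀ a b : ℝ, a ≤ b →
      d (γ a) (γ b) ≤ ∫ t in a..b,
        Real.sqrt (g (γ t) (mfderiv 𝓘(ℝ, ℝ) (𝓡 n) γ t (1 : ℝ))
          (mfderiv 𝓘(ℝ, ℝ) (𝓡 n) γ t (1 : ℝ))))
    (X : ∀ q : M, TangentSpace (𝓡 n) q)
    (hX : ContMDiff (𝓡 n) (𝓡 n).tangent (⊤ : ℕ∞)
      (fun q => (⟨q, X q⟩ : TangentBundle (𝓡 n) M)))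
    (covX : ∀ q : M, EuclideanSpace ℝ (Fin n) →ₗ[ℝ] EuclideanSpace ℝ (Fin n))
    (hcompat : ∀ γ : ℝ → M, ContMDiff 𝓘(ℝ, ℝ) (𝓡 n) (⊤ : ℕ∞) γ → ∀ t : ℝ,
      HasDerivAt (fun s => g (γ s) (X (γ s)) (X (γ s)))
        (2 * g (γ t) (covX (γ t) (mfderiv 𝓘(ℝ, ℝ) (𝓡 n) γ t (1 : ℝ))) (X (γ t))) t)
    (C' : ℝ) (hC'0 : 0 ≤ C')
    (hC : ∀ (q : M) (v : EuclideanSpace ℝ (Fin n)),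
      Real.sqrt (g q (covX q v) (covX q v)) ≤ C' * Real.sqrt (g q v v))
    {q₀ : M} {a : ℝ} (ha : 0 < a) {γ : ℝ → M} (hγ0 : γ 0 = q₀)
    (hγ : IsMIntegralCurveOn γ X (Ioo (-a) a)) :
    ∀ t ∈ Ioo (-a) a,
      d q₀ (γ t) ≤ a * (Real.sqrt (g q₀ (X q₀) (X q₀)) * Real.exp (C' * a)) := by
  have hπ := Real.pi_pos
  -- the reparametrisation
  set c : ℝ := 2 * a / Real.pi with hc
  have hcpos : 0 < c := by positivity
  set σ : ℝ → ℝ := fun s => c * Real.arctan s with hσ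
  set σ' : ℝ → ℝ := fun s => c * (1 / (1 + s ^ 2)) with hσ'
  have hσd : ∀ s, HasDerivAt σ (σ' s) s := fun s => (Real.hasDerivAt_arctan s).const_mul c
  have hσ'pos : ∀ s, 0 < σ' s := fun s => by positivity
  have hkey : c * (Real.pi / 2) = a := by rw [hc]; field_simp
  have hσmem : ∀ s, σ s ∈ Ioo (-a) a := by
    intro s
    have h1 := (mul_lt_mul_iff_right₀ hcpos).mpr (Real.arctan_lt_pi_div_two s)
    have h2 := (mul_lt_mul_iff_right₀ hcpos).mpr (Real.neg_pi_div_two_lt_arctan s)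
    rw [hσ]
    constructor
    · simp only [mul_neg] at h2
      simp only []
      linarith
    · simp only []
      linarith
  have hσ0 : σ 0 = 0 := by simp [hσ]
  have hσc : Continuous σ' := by
    apply continuous_const.mul
    apply Continuous.div continuous_const
      (continuous_const.add (continuous_pow 2))
    intro s; simp only [Pi.add_apply]; positivity
  -- the smooth global curve δ
  have hγs : ContMDiffOn 𝓘(ℝ, ℝ) (𝓡 n) (⊤ : ℕ∞) γ (Ioo (-a) a) :=
    bcd_smoothOn hX isOpen_Ioo hγ
  have hσsm : ContMDiff 𝓘(ℝ, ℝ) 𝓘(ℝ, ℝ) (⊤ : ℕ∞) σ :=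
    (contDiff_const.mul Real.contDiff_arctan).contMDiff
  set δ : ℝ → M := γ ∘ σ with hδdef
  have hδ : ContMDiff 𝓘(ℝ, ℝ) (𝓡 n) (⊤ : ℕ∞) δ := by
    rw [← contMDiffOn_univ]
    exact hγs.comp hσsm.contMDiffOn (fun s _ => hσmem s)
  have hδ0 : δ 0 = q₀ := by rw [hδdef, Function.comp_apply, hσ0, hγ0]
  -- the manifold derivative of δ
  have hmfd : ∀ s, HasMFDerivAt 𝓘(ℝ, ℝ) (𝓡 n) δ s
      (ContinuousLinearMap.smulRight (1 : ℝ →L[ℝ] ℝ) (σ' s • X (δ s))) := by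
    intro s
    have h1 := (hγ (σ s) (hσmem s)).hasMFDerivAt (isOpen_Ioo.mem_nhds (hσmem s))
    have h2 : HasMFDerivAt 𝓘(ℝ, ℝ) 𝓘(ℝ, ℝ) σ s
        ((ContinuousLinearMap.smulRight (1 : ℝ →L[ℝ] ℝ) (σ' s) : ℝ →L[ℝ] ℝ)) :=
      by have h' := (hasDerivAt_iff_hasFDerivAt.mp (hσd s)).hasMFDerivAt; exact h'
    apply (h1.comp s h2).congr_mfderiv
    refine ContinuousLinearMap.ext fun u => ?_
    show ((show ℝ from u) * σ' s) • X (γ (σ s)) = (show ℝ from u) • (σ' s • X (γ (σ s)))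
    rw [smul_smul]
  have hmfd1 : ∀ s, mfderiv 𝓘(ℝ, ℝ) (𝓡 n) δ s (1 : ℝ) = σ' s • X (δ s) := by
    intro s
    rw [(hmfd s).mfderiv]
    show (1 : ℝ) • (σ' s • X (δ s)) = σ' s • X (δ s)
    rw [one_smul]
  -- the energy function along δ
  set h : ℝ → ℝ := fun s => g (δ s) (X (δ s)) (X (δ s)) with hh
  have hnn : ∀ s, 0 ≤ h s := fun s => bcd_nonneg (g (δ s)) (hgpos (δ s)) _
  have hd : ∀ s, HasDerivAt h (2 * (σ' s * g (δ s) (covX (δ s) (X (δ s))) (X (δ s)))) s := by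
    intro s
    have := hcompat δ hδ s
    rw [hmfd1 s] at this
    erw [map_smul, map_smul, LinearMap.smul_apply] at this
    simpa only [map_smul, LinearMap.smul_apply, smul_eq_mul, mul_assoc] using this
  -- Cauchy-Schwarz bounds
  have hcs : ∀ s, g (δ s) (covX (δ s) (X (δ s))) (X (δ s)) ≤ C' * h s := by
    intro s
    calc g (δ s) (covX (δ s) (X (δ s))) (X (δ s))
        ≤ Real.sqrt (g (δ s) (covX (δ s) (X (δ s))) (covX (δ s) (X (δ s)))) *
          Real.sqrt (g (δ s) (X (δ s)) (X (δ s))) :=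
          bcd_cs (g (δ s)) (hgsymm (δ s)) (hgpos (δ s)) _ _
      _ ≤ (C' * Real.sqrt (g (δ s) (X (δ s)) (X (δ s)))) *
          Real.sqrt (g (δ s) (X (δ s)) (X (δ s))) := by
          apply mul_le_mul_of_nonneg_right (hC _ _) (Real.sqrt_nonneg _)
      _ = C' * h s := by
          rw [mul_assoc, Real.mul_self_sqrt (hnn s)]
  have hcs' : ∀ s, -(C' * h s) ≤ g (δ s) (covX (δ s) (X (δ s))) (X (δ s)) := by
    intro s
    set Y : EuclideanSpace ℝ (Fin n) := X (δ s) with hY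
    have h1 := bcd_cs (g (δ s)) (hgsymm (δ s)) (hgpos (δ s))
      (covX (δ s) (X (δ s))) (-Y)
    simp only [map_neg, LinearMap.neg_apply, neg_neg] at h1
    have h2 := mul_le_mul_of_nonneg_right (hC (δ s) (X (δ s)))
      (Real.sqrt_nonneg (g (δ s) (X (δ s)) (X (δ s))))
    rw [mul_assoc, Real.mul_self_sqrt (hnn s)] at h2
    linarith
  -- Gronwall via monotonicity
  have hbound : ∀ s, h s ≤ h 0 * Real.exp (2 * C' * a) := by
    have hσdiff : Differentiable ℝ σ := fun s => (hσd s).differentiableAt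
    have hhdiff : Differentiable ℝ h := fun s => (hd s).differentiableAt
    intro s
    rcases le_or_gt 0 s with hs | hs
    · -- use Hminus
      set Hm : ℝ → ℝ := fun u => h u * Real.exp (-(2 * C') * σ u) with hHm
      have hHmd : ∀ u, HasDerivAt Hm
          (2 * (σ' u * g (δ u) (covX (δ u) (X (δ u))) (X (δ u))) * Real.exp (-(2 * C') * σ u)
            + h u * (Real.exp (-(2 * C') * σ u) * (-(2 * C') * σ' u))) u := by
        intro u
        exact (hd u).mul (((hσd u).const_mul (-(2 * C'))).exp)
      have hanti : Antitone Hm := by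
        apply antitone_of_deriv_nonpos
        · exact fun u => ((hHmd u).differentiableAt)
        · intro u
          rw [(hHmd u).deriv]
          have h1 := hcs u
          have h2 := (hσ'pos u).le
          have h3 := Real.exp_pos (-(2 * C') * σ u)
          have h4 := hnn u
          nlinarith [mul_le_mul_of_nonneg_left h1 h2]
      have := hanti hs
      rw [hHm] at this
      simp only [hσ0, mul_zero, Real.exp_zero, mul_one] at this
      have hσs : -(2 * C') * σ s ≥ -(2 * C' * a) := by
        have := (hσmem s).2
        nlinarith [hC'0]
      calc h s = h s * Real.exp (-(2 * C') * σ s) * Real.exp (2 * C' * σ s) := by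
            rw [mul_assoc, ← Real.exp_add]; ring_nf; simp
        _ ≤ h 0 * Real.exp (2 * C' * σ s) := by
            apply mul_le_mul_of_nonneg_right this (Real.exp_pos _).le
        _ ≤ h 0 * Real.exp (2 * C' * a) := by
            apply mul_le_mul_of_nonneg_left _ (hnn 0)
            apply Real.exp_le_exp.mpr
            nlinarith [(hσmem s).2, hC'0]
    · -- use Hplus
      set Hp : ℝ → ℝ := fun u => h u * Real.exp ((2 * C') * σ u) with hHp
      have hHpd : ∀ u, HasDerivAt Hp
          (2 * (σ' u * g (δ u) (covX (δ u) (X (δ u))) (X (δ u))) * Real.exp ((2 * C') * σ u)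
            + h u * (Real.exp ((2 * C') * σ u) * ((2 * C') * σ' u))) u := by
        intro u
        exact (hd u).mul (((hσd u).const_mul ((2 * C'))).exp)
      have hmono : Monotone Hp := by
        apply monotone_of_deriv_nonneg
        · exact fun u => ((hHpd u).differentiableAt)
        · intro u
          rw [(hHpd u).deriv]
          have h1 := hcs' u
          have h2 := (hσ'pos u).le
          have h3 := Real.exp_pos ((2 * C') * σ u)
          have h4 := hnn u
          nlinarith [mul_le_mul_of_nonneg_left h1 h2]
      have := hmono hs.le
      rw [hHp] at this
      simp only [hσ0, mul_zero, Real.exp_zero, mul_one] at this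
      calc h s = h s * Real.exp ((2 * C') * σ s) * Real.exp (-(2 * C' * σ s)) := by
            rw [mul_assoc, ← Real.exp_add]; ring_nf; simp
        _ ≤ h 0 * Real.exp (-(2 * C' * σ s)) := by
            apply mul_le_mul_of_nonneg_right this (Real.exp_pos _).le
        _ ≤ h 0 * Real.exp (2 * C' * a) := by
            apply mul_le_mul_of_nonneg_left _ (hnn 0)
            apply Real.exp_le_exp.mpr
            nlinarith [(hσmem s).1, hC'0]
  have hh0 : h 0 = g q₀ (X q₀) (X q₀) :=
    congrArg (fun q => g q (X q) (X q)) hδ0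
  set B : ℝ := Real.sqrt (g q₀ (X q₀) (X q₀)) * Real.exp (C' * a) with hB
  have hBnn : 0 ≤ B := by positivity
  have hsq : ∀ s, Real.sqrt (h s) ≤ B := by
    intro s
    calc Real.sqrt (h s) ≤ Real.sqrt (h 0 * Real.exp (2 * C' * a)) :=
          Real.sqrt_le_sqrt (hbound s)
      _ = Real.sqrt (h 0) * Real.sqrt (Real.exp (2 * C' * a)) :=
          Real.sqrt_mul (hnn 0) _
      _ = B := by
          rw [show 2 * C' * a = C' * a + (C' * a) by ring, Real.exp_add,
            Real.sqrt_mul_self (Real.exp_pos _).le, hh0, hB]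
  -- the integrand is σ' u * sqrt (h u)
  have hi : ∀ u : ℝ, Real.sqrt (g (δ u) (mfderiv 𝓘(ℝ, ℝ) (𝓡 n) δ u (1 : ℝ))
      (mfderiv 𝓘(ℝ, ℝ) (𝓡 n) δ u (1 : ℝ))) = σ' u * Real.sqrt (h u) := by
    intro u
    rw [hmfd1 u]
    erw [map_smul, map_smul, LinearMap.smul_apply]
    simp only [map_smul, LinearMap.smul_apply, smul_eq_mul]
    rw [show σ' u * (σ' u * g (δ u) (X (δ u)) (X (δ u))) = (σ' u) ^ 2 * h u by rw [hh]; ring]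
    rw [Real.sqrt_mul (sq_nonneg _), Real.sqrt_sq (hσ'pos u).le]
  have hhc : Continuous fun u => Real.sqrt (h u) :=
    (continuous_iff_continuousAt.mpr fun u => (hd u).continuousAt).sqrt
  -- now the length estimate
  intro t ht
  set θ : ℝ := t * (Real.pi / (2 * a)) with hθ
  have hθmem : -(Real.pi / 2) < θ ∧ θ < Real.pi / 2 := by
    constructor
    · rw [hθ]
      rcases ht with ⟨h1, h2⟩
      rw [neg_lt, ← neg_mul]
      calc Real.pi / 2 = a * (Real.pi / (2 * a)) := by field_simp
        _ > -t * (Real.pi / (2 * a)) := by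
            apply mul_lt_mul_of_pos_right _ (by positivity)
            linarith
    · rw [hθ]
      rcases ht with ⟨h1, h2⟩
      calc t * (Real.pi / (2 * a)) < a * (Real.pi / (2 * a)) :=
            mul_lt_mul_of_pos_right h2 (by positivity)
        _ = Real.pi / 2 := by field_simp
  set s₀ : ℝ := Real.tan θ with hs₀
  have hσs₀ : σ s₀ = t := by
    show c * Real.arctan (Real.tan θ) = t
    rw [Real.arctan_tan hθmem.1 hθmem.2, hθ, hc]
    field_simp
  have hδs₀ : δ s₀ = γ t := by rw [hδdef, Function.comp_apply, hσs₀]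
  have hint : ∀ x y : ℝ, x ≤ y →
      (∫ u in x..y, Real.sqrt (g (δ u) (mfderiv 𝓘(ℝ, ℝ) (𝓡 n) δ u (1 : ℝ))
        (mfderiv 𝓘(ℝ, ℝ) (𝓡 n) δ u (1 : ℝ)))) ≤ (σ y - σ x) * B := by
    intro x y hxy
    have hcont1 : Continuous fun u => σ' u * Real.sqrt (h u) := hσc.mul hhc
    have hcont2 : Continuous fun u => σ' u * B := hσc.mul continuous_const
    calc (∫ u in x..y, Real.sqrt (g (δ u) (mfderiv 𝓘(ℝ, ℝ) (𝓡 n) δ u (1 : ℝ))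
          (mfderiv 𝓘(ℝ, ℝ) (𝓡 n) δ u (1 : ℝ))))
        = ∫ u in x..y, σ' u * Real.sqrt (h u) := by
          apply intervalIntegral.integral_congr
          intro u _
          exact hi u
      _ ≤ ∫ u in x..y, σ' u * B := by
          apply intervalIntegral.integral_mono_on hxy
            (hcont1.continuousOn.intervalIntegrable)
            (hcont2.continuousOn.intervalIntegrable)
          intro u _
          exact mul_le_mul_of_nonneg_left (hsq u) (hσ'pos u).le
      _ = (σ y - σ x) * B := by
          rw [intervalIntegral.integral_mul_const]
          congr 1
          exact intervalIntegral.integral_eq_sub_of_hasDerivAt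
            (fun u _ => hσd u) (hσc.continuousOn.intervalIntegrable)
  rcases le_or_gt 0 s₀ with hs | hs
  · have hlen := hdlen δ hδ 0 s₀ hs
    rw [hδ0, hδs₀] at hlen
    calc d q₀ (γ t) ≤ _ := hlen
      _ ≤ (σ s₀ - σ 0) * B := hint 0 s₀ hs
      _ = t * B := by rw [hσs₀, hσ0, sub_zero]
      _ ≤ a * B := mul_le_mul_of_nonneg_right (ht.2.le) hBnn
  · have hlen := hdlen δ hδ s₀ 0 hs.le
    rw [hδ0, hδs₀] at hlen
    rw [hdsymm q₀ (γ t)]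
    calc d (γ t) q₀ ≤ _ := hlen
      _ ≤ (σ 0 - σ s₀) * B := hint s₀ 0 hs.le
      _ = -t * B := by rw [hσs₀, hσ0, zero_sub, neg_mul]
      _ ≤ a * B := by
          apply mul_le_mul_of_nonneg_right _ hBnn
          linarith [ht.1]

end BcdAux

set_option maxHeartbeats 1000000 in
/-- A smooth vector field `X` with uniformly bounded covariant derivative on a complete
Riemannian manifold `(M, g)` is complete.  The Riemannian metric is encoded as a smooth
family of positive definite symmetric bilinear forms on the tangent spaces; completeness
is encoded through the Riemannian distance `d`, compatible with the `g`-length of smooth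
curves and whose closed balls are compact (Hopf–Rinow); the covariant differential
`∇X : T_pM → T_pM` is encoded by `covX`, required to satisfy metric compatibility along
curves, and has uniformly bounded `g`-operator norm `‖∇X(p)‖_g ≤ C`.  The conclusion is
that through every point there is an integral curve of `X` defined on all of `ℝ`. -/
theorem bounded_covariant_derivative_complete
    {n : ℕ} {M : Type*} [TopologicalSpace M] [T2Space M]
    [ChartedSpace (EuclideanSpace ℝ (Fin n)) M]
    [IsManifold (𝓡 n) (⊤ : ℕ∞) M]
    -- a Riemannian metric g on M
    (g : ∀ q : M, EuclideanSpace ℝ (Fin n) →ₗ[ℝ] EuclideanSpace ℝ (Fin n) →ₗ[ℝ] ℝ)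
    (hgsymm : ∀ (q : M) (v w : EuclideanSpace ℝ (Fin n)), g q v w = g q w v)
    (hgpos : ∀ (q : M) (v : EuclideanSpace ℝ (Fin n)), v ≠ 0 → 0 < g q v v)
    (hgsmooth : ∀ v w : EuclideanSpace ℝ (Fin n),
      ContMDiff (𝓡 n) 𝓘(ℝ, ℝ) (⊤ : ℕ∞) (fun q => g q v w))
    -- the Riemannian distance function, with respect to which (M, g) is complete:
    (d : M → M → ℝ)
    (hd0 : ∀ q, d q q = 0) (hdnn : ∀ p q, 0 ≤ d p q)
    (hdsymm : ∀ p q, d p q = d q p)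
    (hdtri : ∀ p q r, d p r ≤ d p q + d q r)
    -- … the distance is bounded by the g-length of smooth curves …
    (hdlen : ∀ γ : ℝ → M, ContMDiff 𝓘(ℝ, ℝ) (𝓡 n) (⊤ : ℕ∞) γ → ∀ a b : ℝ, a ≤ b →
      d (γ a) (γ b) ≤ ∫ t in a..b,
        Real.sqrt (g (γ t) (mfderiv 𝓘(ℝ, ℝ) (𝓡 n) γ t (1 : ℝ))
          (mfderiv 𝓘(ℝ, ℝ) (𝓡 n) γ t (1 : ℝ))))
    -- … and closed metric balls are compact (Hopf–Rinow)
    (hHR : ∀ (q : M) (r : ℝ), IsCompact {p : M | d q p ≤ r})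
    -- a smooth vector field X on M
    (X : ∀ q : M, TangentSpace (𝓡 n) q)
    (hX : ContMDiff (𝓡 n) (𝓡 n).tangent (⊤ : ℕ∞)
      (fun q => (⟨q, X q⟩ : TangentBundle (𝓡 n) M)))
    -- the covariant differential ∇X of X, metric-compatible along curves
    (covX : ∀ q : M, EuclideanSpace ℝ (Fin n) →ₗ[ℝ] EuclideanSpace ℝ (Fin n))
    (hcompat : ∀ γ : ℝ → M, ContMDiff 𝓘(ℝ, ℝ) (𝓡 n) (⊤ : ℕ∞) γ → ∀ t : ℝ,
      HasDerivAt (fun s => g (γ s) (X (γ s)) (X (γ s)))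
        (2 * g (γ t) (covX (γ t) (mfderiv 𝓘(ℝ, ℝ) (𝓡 n) γ t (1 : ℝ))) (X (γ t))) t)
    -- with uniformly bounded g-operator norm:  C = sup_p ‖∇X(p)‖_g < ∞
    (C : ℝ)
    (hC : ∀ (q : M) (v : EuclideanSpace ℝ (Fin n)),
      Real.sqrt (g q (covX q v) (covX q v)) ≤ C * Real.sqrt (g q v v)) :
    -- X is complete
    ∀ q₀ : M, ∃ γ : ℝ → M, γ 0 = q₀ ∧
      ∀ t : ℝ, HasMFDerivAt 𝓘(ℝ, ℝ) (𝓡 n) γ t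
        (ContinuousLinearMap.smulRight (1 : ℝ →L[ℝ] ℝ) (X (γ t))) := by
  intro q₀
  have hX1 : ContMDiff (𝓡 n) (𝓡 n).tangent 1
      (fun q => (⟨q, X q⟩ : TangentBundle (𝓡 n) M)) := hX.of_le (by exact_mod_cast le_top)
  set C' : ℝ := max C 0 with hC'def
  have hC'0 : 0 ≤ C' := le_max_right _ _
  have hC' : ∀ (q : M) (v : EuclideanSpace ℝ (Fin n)),
      Real.sqrt (g q (covX q v) (covX q v)) ≤ C' * Real.sqrt (g q v v) := fun q v =>
    le_trans (hC q v) (mul_le_mul_of_nonneg_right (le_max_left _ _) (Real.sqrt_nonneg _))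
  have hflow := bcd_localFlow hX
  suffices h : ∃ γ : ℝ → M, γ 0 = q₀ ∧ IsMIntegralCurve γ X by
    obtain ⟨γ, h0, hγ⟩ := h
    exact ⟨γ, h0, fun t => hγ t⟩
  rw [exists_isMIntegralCurve_iff_exists_isMIntegralCurveOn_Ioo hX1 q₀]
  set S := {a : ℝ | ∃ γ : ℝ → M, γ 0 = q₀ ∧ IsMIntegralCurveOn γ X (Ioo (-a) a)} with hS
  obtain ⟨ε₁, hε₁, U₁, hU₁, hsol₁⟩ := hflow q₀
  have hε₁S : ε₁ ∈ S := hsol₁ q₀ (mem_of_mem_nhds hU₁)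
  suffices hbdd : ¬BddAbove S by
    rw [not_bddAbove_iff] at hbdd
    intro a
    obtain ⟨y, hy, hlt⟩ := hbdd a
    obtain ⟨γ, h1, h2⟩ := hy
    exact ⟨γ, h1, h2.mono (Ioo_subset_Ioo (neg_le_neg hlt.le) hlt.le)⟩
  intro hbdd
  set A := sSup S with hA
  have hApos : 0 < A := lt_of_lt_of_le hε₁ (le_csSup hbdd hε₁S)
  set R : ℝ := A * (Real.sqrt (g q₀ (X q₀) (X q₀)) * Real.exp (C' * A)) with hRdef
  have hstayK : ∀ a ∈ S, 0 < a → ∀ γ : ℝ → M, γ 0 = q₀ →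
      IsMIntegralCurveOn γ X (Ioo (-a) a) →
      ∀ t ∈ Ioo (-a) a, d q₀ (γ t) ≤ R := by
    intro a haS hapos γ h0 hγ t ht
    refine le_trans (bcd_stay g hgsymm hgpos d hdsymm hdlen X hX covX hcompat C' hC'0 hC'
      hapos h0 hγ t ht) ?_
    have haA : a ≤ A := le_csSup hbdd haS
    rw [hRdef]
    have h1 : Real.exp (C' * a) ≤ Real.exp (C' * A) :=
      Real.exp_le_exp.mpr (mul_le_mul_of_nonneg_left haA hC'0)
    have h2 : (0:ℝ) ≤ Real.sqrt (g q₀ (X q₀) (X q₀)) := Real.sqrt_nonneg _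
    have h3 : (0:ℝ) < Real.exp (C' * a) := Real.exp_pos _
    calc a * (Real.sqrt (g q₀ (X q₀) (X q₀)) * Real.exp (C' * a))
        ≤ a * (Real.sqrt (g q₀ (X q₀) (X q₀)) * Real.exp (C' * A)) :=
          mul_le_mul_of_nonneg_left (mul_le_mul_of_nonneg_left h1 h2) hapos.le
      _ ≤ A * (Real.sqrt (g q₀ (X q₀) (X q₀)) * Real.exp (C' * A)) :=
          mul_le_mul_of_nonneg_right haA (by positivity)
  obtain ⟨ε₀, hε₀, hsolK⟩ := bcd_uniformTime hflow (hHR q₀ R)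
  set ε := min ε₀ A with hεdef
  have hε : 0 < ε := lt_min hε₀ hApos
  have hεle : ε ≤ A := min_le_right _ _
  have h : ∀ x : M, d q₀ x ≤ R → ∃ γ : ℝ → M, γ 0 = x ∧
      IsMIntegralCurveOn γ X (Ioo (-ε) ε) := by
    intro x hx
    obtain ⟨γ, h0, hγ⟩ := hsolK x hx
    exact ⟨γ, h0, hγ.mono (Ioo_subset_Ioo (neg_le_neg (min_le_left _ _)) (min_le_left _ _))⟩
  -- now the sup argument, following mathlib's uniform-time proof
  obtain ⟨a, ha, hlt⟩ := Real.add_neg_lt_sSup (⟨ε₁, hε₁S⟩ : S.Nonempty) (ε := -(ε / 2))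
    (by rw [neg_lt, neg_zero]; exact half_pos hε)
  rw [hS, mem_setOf] at ha
  rw [← hA, ← sub_eq_add_neg] at hlt
  obtain ⟨γ, h0, hγ⟩ := ha
  have hapos : 0 < a := by linarith
  have haS : a ∈ S := ⟨γ, h0, hγ⟩
  have haA : a ≤ A := le_csSup hbdd haS
  have hmem1 : -(A - ε / 2) ∈ Ioo (-a) a := by constructor <;> [skip; skip] <;> linarith
  have hmem2 : (A - ε / 2) ∈ Ioo (-a) a := by constructor <;> [skip; skip] <;> linarith
  have hK1 := hstayK a haS hapos γ h0 hγ _ hmem1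
  have hK2 := hstayK a haS hapos γ h0 hγ _ hmem2
  -- integral curve starting at `-(A - ε / 2)` with radius `ε`
  obtain ⟨γ1_aux, h1_aux, hγ1⟩ := h (γ (-(A - ε / 2))) hK1
  rw [← isMIntegralCurveOn_comp_add (dt := A - ε / 2)] at hγ1
  set γ1 := γ1_aux ∘ (· + (A - ε / 2)) with γ1_def
  have heq1 : γ1 (-(A - ε / 2)) = γ (-(A - ε / 2)) := by simp [γ1_def, h1_aux]
  -- integral curve starting at `A - ε / 2` with radius `ε`
  obtain ⟨γ2_aux, h2_aux, hγ2⟩ := h (γ (A - ε / 2)) hK2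
  rw [← isMIntegralCurveOn_comp_sub (dt := A - ε / 2)] at hγ2
  set γ2 := γ2_aux ∘ (· - (A - ε / 2)) with γ2_def
  have heq2 : γ2 (A - ε / 2) = γ (A - ε / 2) := by simp [γ2_def, h2_aux]
  have e1 : {t | t + (A - ε / 2) ∈ Ioo (-ε) ε} = Ioo (ε / 2 - A - ε) (ε / 2 - A + ε) := by
    ext t; simp only [mem_setOf_eq, mem_Ioo]
    constructor <;> intro hh <;> constructor <;> linarith [hh.1, hh.2]
  have e2 : {t | t - (A - ε / 2) ∈ Ioo (-ε) ε} = Ioo (A - ε / 2 - ε) (A - ε / 2 + ε) := by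
    ext t; simp only [mem_setOf_eq, mem_Ioo]
    constructor <;> intro hh <;> constructor <;> linarith [hh.1, hh.2]
  rw [e1] at hγ1
  rw [e2] at hγ2
  set γ_ext : ℝ → M := piecewise (Ioo (-(A + ε / 2)) a)
    (piecewise (Ioo (-a) a) γ γ1) γ2 with γ_ext_def
  have heq_ext : γ_ext 0 = q₀ := by
    rw [γ_ext_def, piecewise, if_pos ⟨by linarith, by linarith⟩, piecewise,
      if_pos ⟨by linarith, by linarith⟩, h0]
  suffices hext : IsMIntegralCurveOn γ_ext X (Ioo (-(A + ε / 2)) (A + ε / 2)) from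
    (not_lt.mpr <| le_csSup hbdd ⟨γ_ext, heq_ext, hext⟩) <| lt_add_of_pos_right A (half_pos hε)
  apply (isMIntegralCurveOn_piecewise (t₀ := A - ε / 2) hX1 _ hγ2
      ⟨⟨by linarith, hlt⟩, ⟨by linarith, by linarith⟩⟩
      (by rw [piecewise, if_pos ⟨by linarith, hlt⟩, ← heq2])).mono
    (Ioo_subset_Ioo_union_Ioo le_rfl (by linarith) (by linarith))
  exact (isMIntegralCurveOn_piecewise (t₀ := -(A - ε / 2)) hX1 hγ hγ1
      ⟨⟨neg_lt_neg hlt, by linarith⟩, ⟨by linarith, by linarith⟩⟩ heq1.symm).mono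
    (union_comm _ _ ▸ Ioo_subset_Ioo_union_Ioo (by linarith) (by linarith) le_rfl)
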